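/- Let 𝒥 = (J_1,…,J_m) be a cover of I = {1,…,n} satisfying conditions (B1) and (B2), and for each k let W^{J_k} have the Gibbs block structure for J_k; assume condition (A1) with constant λ ∈ [0,1). Let 𝒲_odd be the product of the matrices W^{J_k} over odd k taken in decreasing order of k, 𝒲_even the product over even k in decreasing order of k, and 𝒲 = 𝒲_even·𝒲_odd (the Wasserstein matrix of one complete sweep of the parallel (PAR) blocked Gibbs sampler). Then ‖𝒲‖_∞ ≤ 2 and, for every integer k ≥ 1, ‖𝒲^k‖_∞ ≤ ‖𝒲‖_∞ · λ^{2(k−1)}. -/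

import Mathlib

open Finset

/-- The boundary `∂J` of a block `J ⊆ I`: indices outside `J` adjacent to `J`. -/
def bdry {n : ℕ} (J : Finset (Fin n)) : Finset (Fin n) :=
  Finset.univ.filter fun t => t ∉ J ∧ ∃ s ∈ J, ((s : ℕ) = (t : ℕ) + 1 ∨ (t : ℕ) = (s : ℕ) + 1)

/-- `W` has the Gibbs block structure for block `J`: entries in `[0,1]`, rows outside `J`
are identity rows, and rows in `J` vanish outside `∂J`. -/
def GibbsBlock {n : ℕ} (J : Finset (Fin n)) (W : Matrix (Fin n) (Fin n) ℝ) : Prop :=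
  (∀ i j, 0 ≤ W i j ∧ W i j ≤ 1) ∧
  (∀ i, i ∉ J → ∀ j, W i j = if i = j then 1 else 0) ∧
  (∀ i ∈ J, ∀ j, j ∉ bdry J → W i j = 0)

/-- Maximum absolute row sum norm `‖A‖_∞`. -/
noncomputable def rowNorm {n : ℕ} (A : Matrix (Fin n) (Fin n) ℝ) : ℝ :=
  ⨆ i, ∑ j, |A i j|

/-- The list `[m, m-1, …, 1]`. -/
def descList (m : ℕ) : List ℕ := (List.range m).map fun i => m - i

/-- A block is a (nonempty) integer interval. -/
def IsIntervalBlock {n : ℕ} (J : Finset (Fin n)) : Prop :=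
  J.Nonempty ∧ ∀ a ∈ J, ∀ b ∈ J, ∀ c : Fin n, a ≤ c → c ≤ b → c ∈ J

/-- Smallest index of a block (as a natural number). -/
noncomputable def blockMin {n : ℕ} (J : Finset (Fin n)) : ℕ :=
  sInf {t : ℕ | ∃ s ∈ J, (s : ℕ) = t}

/-- Largest index of a block (as a natural number). -/
def blockMax {n : ℕ} (J : Finset (Fin n)) : ℕ := J.sup fun t => (t : ℕ)

/-- Condition (B1): blocks are intervals, ordered by their min and max elements. -/
def CondB1 {n : ℕ} (m : ℕ) (J : ℕ → Finset (Fin n)) : Prop :=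
  (∀ k ∈ Finset.Icc 1 m, IsIntervalBlock (J k)) ∧
  ∀ j k, 1 ≤ j → j < k → k ≤ m →
    blockMin (J j) < blockMin (J k) ∧ blockMax (J j) < blockMax (J k)

/-- Condition (B2): non-consecutive blocks are separated. -/
def CondB2 {n : ℕ} (m : ℕ) (J : ℕ → Finset (Fin n)) : Prop :=
  ∀ j k, 1 ≤ j → j + 2 ≤ k → k ≤ m → blockMax (J j) + 1 < blockMin (J k)

/-- Matrix entry addressed with integer indices; out-of-range indices give `0`. -/
noncomputable def entryZ {n : ℕ} (A : Matrix (Fin n) (Fin n) ℝ) (i j : ℤ) : ℝ :=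
  if hi : 0 ≤ i ∧ i < (n : ℤ) then
    if hj : 0 ≤ j ∧ j < (n : ℤ) then A ⟨i.toNat, by omega⟩ ⟨j.toNat, by omega⟩ else 0
  else 0

lemma blockMin_le {n : ℕ} {J : Finset (Fin n)} {t : Fin n} (ht : t ∈ J) :
    blockMin J ≤ (t : ℕ) := Nat.sInf_le ⟨t, ht, rfl⟩

lemma le_blockMax {n : ℕ} {J : Finset (Fin n)} {t : Fin n} (ht : t ∈ J) :
    (t : ℕ) ≤ blockMax J := Finset.le_sup ht

lemma exists_blockMin {n : ℕ} {J : Finset (Fin n)} (h : J.Nonempty) :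
    ∃ s ∈ J, (s : ℕ) = blockMin J := by
  have : blockMin J ∈ {t : ℕ | ∃ s ∈ J, (s : ℕ) = t} := by
    apply Nat.sInf_mem
    obtain ⟨a, ha⟩ := h
    exact ⟨a, a, ha, rfl⟩
  exact this

lemma exists_blockMax {n : ℕ} {J : Finset (Fin n)} (h : J.Nonempty) :
    ∃ s ∈ J, (s : ℕ) = blockMax J := by
  obtain ⟨b, hb, hb2⟩ := Finset.exists_mem_eq_sup J h (fun t => (t : ℕ))
  exact ⟨b, hb, hb2.symm⟩

lemma blockMin_le_blockMax {n : ℕ} {J : Finset (Fin n)} (h : J.Nonempty) :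
    blockMin J ≤ blockMax J := by
  obtain ⟨a, ha, h2⟩ := exists_blockMin h
  calc blockMin J = (a:ℕ) := h2.symm
    _ ≤ blockMax J := le_blockMax ha

lemma mem_of_between {n : ℕ} {J : Finset (Fin n)} (h : IsIntervalBlock J) (t : Fin n)
    (h1 : blockMin J ≤ (t : ℕ)) (h2 : (t : ℕ) ≤ blockMax J) : t ∈ J := by
  obtain ⟨a, ha, ha2⟩ := exists_blockMin h.1
  obtain ⟨b, hb, hb2⟩ := exists_blockMax h.1
  exact h.2 a ha b hb t (by rw [Fin.le_def]; omega) (by rw [Fin.le_def]; omega)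

lemma mem_bdry {n : ℕ} {J : Finset (Fin n)} {t : Fin n} :
    t ∈ bdry J ↔ t ∉ J ∧ ∃ s ∈ J, ((s : ℕ) = (t : ℕ) + 1 ∨ (t : ℕ) = (s : ℕ) + 1) := by
  simp [bdry]

lemma bdry_val {n : ℕ} {J : Finset (Fin n)} (h : IsIntervalBlock J) {t : Fin n}
    (ht : t ∈ bdry J) : (t : ℕ) + 1 = blockMin J ∨ (t : ℕ) = blockMax J + 1 := by
  rw [mem_bdry] at ht
  obtain ⟨htJ, s, hs, hcase⟩ := ht
  have hsmin := blockMin_le hs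
  have hsmax := le_blockMax hs
  rcases hcase with h1 | h2
  · left
    by_contra hne
    have h1' : blockMin J ≤ (t : ℕ) := by omega
    exact htJ (mem_of_between h t h1' (by omega))
  · right
    by_contra hne
    have h2' : (t : ℕ) ≤ blockMax J := by omega
    exact htJ (mem_of_between h t (by omega) h2')

lemma bdry_card_le_two {n : ℕ} {J : Finset (Fin n)} (h : IsIntervalBlock J) :
    (bdry J).card ≤ 2 := by
  have : (bdry J).card ≤ ({blockMin J - 1, blockMax J + 1} : Finset ℕ).card := by
    refine Finset.card_le_card_of_injOn (fun t => (t : ℕ)) ?_ ?_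
    · intro t ht
      rcases bdry_val h ht with h1 | h2
      · have hmin1 : 1 ≤ blockMin J := by omega
        simp only [Finset.mem_coe, Finset.mem_insert, Finset.mem_singleton]
        left; omega
      · simp only [Finset.mem_coe, Finset.mem_insert, Finset.mem_singleton]
        right; omega
    · intro a _ b _ hab
      exact Fin.val_injective hab
  calc (bdry J).card ≤ _ := this
    _ ≤ 2 := by
      apply le_trans (Finset.card_insert_le _ _)
      simp

lemma mem_descList {m k : ℕ} : k ∈ descList m ↔ 1 ≤ k ∧ k ≤ m := by
  simp only [descList, List.mem_map, List.mem_range]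
  constructor
  · rintro ⟨i, hi, rfl⟩; omega
  · rintro ⟨h1, h2⟩; exact ⟨m - k, by omega, by omega⟩

section Sep
variable {n m : ℕ} {J : ℕ → Finset (Fin n)}

/-- Non-adjacent distinct blocks are disjoint. -/
lemma far_disjoint (hB1 : CondB1 m J) (hB2 : CondB2 m J) {j k : ℕ}
    (h1 : 1 ≤ j) (h1' : 1 ≤ k) (h2 : j + 2 ≤ k ∨ k + 2 ≤ j) (h3 : k ≤ m) (h3' : j ≤ m) :
    ∀ t : Fin n, (t ∈ J j ∨ t ∈ bdry (J j)) → t ∉ J k := by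
  have hIj := hB1.1 j (Finset.mem_Icc.mpr ⟨h1, h3'⟩)
  have hIk := hB1.1 k (Finset.mem_Icc.mpr ⟨h1', h3⟩)
  have hjm : blockMin (J j) ≤ blockMax (J j) := blockMin_le_blockMax hIj.1
  have hkm : blockMin (J k) ≤ blockMax (J k) := blockMin_le_blockMax hIk.1
  intro t ht htk
  have hub : (t : ℕ) ≤ blockMax (J j) + 1 := by
    rcases ht with ht | ht
    · have := le_blockMax ht; omega
    · rcases bdry_val hIj ht with h | h <;> omega
  have hlb : blockMin (J j) ≤ (t : ℕ) + 1 := by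
    rcases ht with ht | ht
    · have := blockMin_le ht; omega
    · rcases bdry_val hIj ht with h | h <;> omega
  have h4 := blockMin_le htk
  have h5 := le_blockMax htk
  rcases h2 with h2 | h2
  · have hsep := hB2 j k h1 h2 h3; omega
  · have hsep := hB2 k j h1' h2 h3'; omega

/-- If `t ∈ bdry (J k)` and `t ∈ J l` then `l` is adjacent to `k`. -/
lemma bdry_adjacent (hB1 : CondB1 m J) (hB2 : CondB2 m J) {k l : ℕ}
    (hk1 : 1 ≤ k) (hk2 : k ≤ m) (hl1 : 1 ≤ l) (hl2 : l ≤ m)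
    {t : Fin n} (ht : t ∈ bdry (J k)) (htl : t ∈ J l) : l = k + 1 ∨ l + 1 = k := by
  have hne : l ≠ k := by
    rintro rfl
    exact (mem_bdry.mp ht).1 htl
  by_contra hcon
  exact far_disjoint hB1 hB2 hk1 hl1 (by omega) hl2 hk2 t (Or.inr ht) htl

end Sep

section Prod
variable {n m : ℕ} {J : ℕ → Finset (Fin n)} {W : ℕ → Matrix (Fin n) (Fin n) ℝ}

lemma prod_nonneg_entries (L : List ℕ)
    (h : ∀ k ∈ L, ∀ i j, 0 ≤ W k i j) :
    ∀ i j, 0 ≤ (L.map W).prod i j := by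
  induction L with
  | nil => intro i j; simp [Matrix.one_apply]; positivity
  | cons a L ih =>
    intro i j
    simp only [List.map_cons, List.prod_cons, Matrix.mul_apply]
    apply Finset.sum_nonneg
    intro t _
    exact mul_nonneg (h a (by simp) i t) (ih (fun k hk => h k (by simp [hk])) t j)

lemma prod_rows (hblock : ∀ k ∈ Finset.Icc 1 m, GibbsBlock (J k) (W k)) (L : List ℕ)
    (hmem : ∀ k ∈ L, k ∈ Finset.Icc 1 m)
    (hdisj : ∀ k ∈ L, ∀ l ∈ L, k ≠ l → ∀ t : Fin n, t ∈ J k → t ∉ J l)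
    (hbd : ∀ k ∈ L, ∀ l ∈ L, ∀ t ∈ bdry (J k), t ∉ J l) :
    (∀ i, (∀ k ∈ L, i ∉ J k) → ∀ j, (L.map W).prod i j = if i = j then 1 else 0) ∧
    (∀ k ∈ L, ∀ i ∈ J k, ∀ j, (L.map W).prod i j = W k i j) := by
  induction L with
  | nil =>
    refine ⟨fun i _ j => ?_, fun k hk => by simp at hk⟩
    simp [Matrix.one_apply]
  | cons a L ih =>
    have hmem' : ∀ k ∈ L, k ∈ Finset.Icc 1 m := fun k hk => hmem k (by simp [hk])
    have hdisj' : ∀ k ∈ L, ∀ l ∈ L, k ≠ l → ∀ t : Fin n, t ∈ J k → t ∉ J l :=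
      fun k hk l hl => hdisj k (by simp [hk]) l (by simp [hl])
    have hbd' : ∀ k ∈ L, ∀ l ∈ L, ∀ t ∈ bdry (J k), t ∉ J l :=
      fun k hk l hl => hbd k (by simp [hk]) l (by simp [hl])
    obtain ⟨ih1, ih2⟩ := ih hmem' hdisj' hbd'
    have hga := hblock a (hmem a (by simp))
    constructor
    · intro i hi j
      simp only [List.map_cons, List.prod_cons, Matrix.mul_apply]
      have hrow : ∀ t, W a i t = if i = t then 1 else 0 :=
        hga.2.1 i (hi a (by simp))
      have : ∀ t, W a i t * (L.map W).prod t j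
          = if i = t then (L.map W).prod t j else 0 := by
        intro t; rw [hrow t]; split <;> simp
      rw [Finset.sum_congr rfl (fun t _ => this t), Finset.sum_ite_eq]
      simp only [Finset.mem_univ, if_true]
      exact ih1 i (fun k hk => hi k (by simp [hk])) j
    · intro k hk i hi j
      simp only [List.map_cons, List.prod_cons, Matrix.mul_apply]
      by_cases hia : i ∈ J a
      · have hWk : W a i j = W k i j := by
          by_cases hak : a = k
          · rw [hak]
          · exact absurd hi (hdisj a (by simp) k hk hak i hia)
        have hterm : ∀ t, W a i t * (L.map W).prod t j
            = W a i t * (if t = j then 1 else 0) := by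
          intro t
          by_cases hz : W a i t = 0
          · simp [hz]
          · have htb : t ∈ bdry (J a) := by
              by_contra hnb
              exact hz (hga.2.2 i hia t hnb)
            have hnt : ∀ l ∈ L, t ∉ J l := fun l hl =>
              hbd a (by simp) l (by simp [hl]) t htb
            rw [ih1 t hnt j]
        rw [Finset.sum_congr rfl (fun t _ => hterm t)]
        simp only [mul_ite, mul_one, mul_zero]
        rw [Finset.sum_ite_eq' Finset.univ j (W a i ·)]
        simp [hWk]
      · have hrow : ∀ t, W a i t = if i = t then 1 else 0 := hga.2.1 i hia
        have : ∀ t, W a i t * (L.map W).prod t j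
            = if i = t then (L.map W).prod t j else 0 := by
          intro t; rw [hrow t]; split <;> simp
        rw [Finset.sum_congr rfl (fun t _ => this t), Finset.sum_ite_eq]
        simp only [Finset.mem_univ, if_true]
        have hkL : k ∈ L := by
          rcases List.mem_cons.mp hk with rfl | hk'
          · exact absurd hi hia
          · exact hk'
        exact ih2 k hkL i hi j

end Prod

theorem stmt2 {n m : ℕ} (hn : 1 ≤ n) (hm : 1 ≤ m)
    (J : ℕ → Finset (Fin n)) (W : ℕ → Matrix (Fin n) (Fin n) ℝ)
    (hcover : ∀ i : Fin n, ∃ k ∈ Finset.Icc 1 m, i ∈ J k)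
    (hB1 : CondB1 m J) (hB2 : CondB2 m J)
    (hblock : ∀ k ∈ Finset.Icc 1 m, GibbsBlock (J k) (W k))
    (lam : ℝ) (hlam0 : 0 ≤ lam) (hlam1 : lam < 1)
    (hA1 : ∀ k ∈ Finset.Icc 1 m, ∀ i ∈ J k,
      i ∈ (Finset.Icc 1 m).biUnion (fun l => bdry (J l)) →
      ∑ j ∈ bdry (J k), W k i j ≤ lam) :
    rowNorm (((((descList m).filter fun k => k % 2 = 0).map W).prod) *
        ((((descList m).filter fun k => k % 2 = 1).map W).prod)) ≤ 2 ∧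
    ∀ k : ℕ, 1 ≤ k →
      rowNorm ((((((descList m).filter fun k => k % 2 = 0).map W).prod) *
          ((((descList m).filter fun k => k % 2 = 1).map W).prod)) ^ k) ≤
        rowNorm (((((descList m).filter fun k => k % 2 = 0).map W).prod) *
          ((((descList m).filter fun k => k % 2 = 1).map W).prod)) * lam ^ (2 * (k - 1)) := by
  have _inst : Nonempty (Fin n) := ⟨⟨0, hn⟩⟩
  -- membership in the filtered lists
  have hLmem : ∀ r k : ℕ, k ∈ (descList m).filter (fun k => k % 2 = r) ↔
      (1 ≤ k ∧ k ≤ m ∧ k % 2 = r) := by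
    intro r k
    simp only [List.mem_filter, mem_descList, decide_eq_true_eq]
    tauto
  -- row structure of the two parity products
  have key : ∀ r : ℕ,
      (∀ i, (∀ k, 1 ≤ k → k ≤ m → k % 2 = r → i ∉ J k) → ∀ j,
        ((((descList m).filter fun k => k % 2 = r).map W).prod) i j
          = if i = j then 1 else 0) ∧
      (∀ k, 1 ≤ k → k ≤ m → k % 2 = r → ∀ i ∈ J k, ∀ j,
        ((((descList m).filter fun k => k % 2 = r).map W).prod) i j = W k i j) := by
    intro r
    have hmem : ∀ k ∈ (descList m).filter (fun k => k % 2 = r), k ∈ Finset.Icc 1 m := by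
      intro k hk
      obtain ⟨h1, h2, _⟩ := (hLmem r k).mp hk
      exact Finset.mem_Icc.mpr ⟨h1, h2⟩
    have hdisj : ∀ k ∈ (descList m).filter (fun k => k % 2 = r),
        ∀ l ∈ (descList m).filter (fun k => k % 2 = r), k ≠ l →
        ∀ t : Fin n, t ∈ J k → t ∉ J l := by
      intro k hk l hl hne t ht
      obtain ⟨hk1, hk2, hk3⟩ := (hLmem r k).mp hk
      obtain ⟨hl1, hl2, hl3⟩ := (hLmem r l).mp hl
      exact far_disjoint hB1 hB2 hk1 hl1 (by omega) hl2 hk2 t (Or.inl ht)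
    have hbd : ∀ k ∈ (descList m).filter (fun k => k % 2 = r),
        ∀ l ∈ (descList m).filter (fun k => k % 2 = r),
        ∀ t ∈ bdry (J k), t ∉ J l := by
      intro k hk l hl t ht
      obtain ⟨hk1, hk2, hk3⟩ := (hLmem r k).mp hk
      obtain ⟨hl1, hl2, hl3⟩ := (hLmem r l).mp hl
      by_cases hne : k = l
      · subst hne; exact (mem_bdry.mp ht).1
      · exact far_disjoint hB1 hB2 hk1 hl1 (by omega) hl2 hk2 t (Or.inr ht)
    obtain ⟨p1, p2⟩ := prod_rows hblock _ hmem hdisj hbd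
    constructor
    · intro i hi j
      exact p1 i (fun k hk => hi k ((hLmem r k).mp hk).1 ((hLmem r k).mp hk).2.1
        ((hLmem r k).mp hk).2.2) j
    · intro k hk1 hk2 hk3 i hi j
      exact p2 k ((hLmem r k).mpr ⟨hk1, hk2, hk3⟩) i hi j
  set Me := ((((descList m).filter fun k => k % 2 = 0).map W).prod) with hMe
  set Mo := ((((descList m).filter fun k => k % 2 = 1).map W).prod) with hMo
  -- nonnegativity
  have hWnn : ∀ r : ℕ, ∀ i j : Fin n,
      0 ≤ ((((descList m).filter fun k => k % 2 = r).map W).prod) i j := by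
    intro r
    apply prod_nonneg_entries
    intro k hk i j
    obtain ⟨h1, h2, _⟩ := (hLmem r k).mp hk
    exact ((hblock k (Finset.mem_Icc.mpr ⟨h1, h2⟩)).1 i j).1
  have hMenn : ∀ i j, 0 ≤ Me i j := hWnn 0
  have hMonn : ∀ i j, 0 ≤ Mo i j := hWnn 1
  have hWmnn : ∀ i j, 0 ≤ (Me * Mo) i j := by
    intro i j
    rw [Matrix.mul_apply]
    exact Finset.sum_nonneg fun t _ => mul_nonneg (hMenn i t) (hMonn t j)
  -- boundary points lie in a block of opposite parity
  have SB : ∀ k, 1 ≤ k → k ≤ m → ∀ t ∈ bdry (J k),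
      ∃ l, 1 ≤ l ∧ l ≤ m ∧ l % 2 ≠ k % 2 ∧ t ∈ J l := by
    intro k hk1 hk2 t ht
    obtain ⟨l, hl, htl⟩ := hcover t
    rw [Finset.mem_Icc] at hl
    have hadj := bdry_adjacent hB1 hB2 hk1 hk2 hl.1 hl.2 ht htl
    exact ⟨l, hl.1, hl.2, by omega, htl⟩
  -- the invariant index set
  set S : Fin n → Prop := fun j =>
    (∃ l, 1 ≤ l ∧ l ≤ m ∧ j ∈ bdry (J l)) ∧
    (∃ k, 1 ≤ k ∧ k ≤ m ∧ k % 2 = 0 ∧ j ∈ J k) with hS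
  have SBS : ∀ l, 1 ≤ l → l ≤ m → l % 2 = 1 → ∀ j ∈ bdry (J l), S j := by
    intro l h1 h2 h3 j hj
    obtain ⟨r, hr1, hr2, hr3, hr4⟩ := SB l h1 h2 j hj
    exact ⟨⟨l, h1, h2, hj⟩, ⟨r, hr1, hr2, by omega, hr4⟩⟩
  -- sums over rows of W k restricted to the boundary
  have hrowW : ∀ k, 1 ≤ k → k ≤ m → ∀ i ∈ J k,
      (∑ j, W k i j = ∑ j ∈ bdry (J k), W k i j) ∧ (∑ j ∈ bdry (J k), W k i j ≤ 2) := by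
    intro k h1 h2 i hi
    have hgb := hblock k (Finset.mem_Icc.mpr ⟨h1, h2⟩)
    constructor
    · rw [← Finset.sum_subset (Finset.subset_univ (bdry (J k)))]
      intro x _ hx
      exact hgb.2.2 i hi x hx
    · calc ∑ j ∈ bdry (J k), W k i j ≤ ∑ j ∈ bdry (J k), 1 :=
            Finset.sum_le_sum fun j _ => (hgb.1 i j).2
        _ = ((bdry (J k)).card : ℝ) := by simp
        _ ≤ 2 := by
            have := bdry_card_le_two (hB1.1 k (Finset.mem_Icc.mpr ⟨h1, h2⟩))
            exact_mod_cast Nat.cast_le.mpr this |>.trans (by norm_num)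
  -- rows of Mo at points in odd blocks
  have OR : ∀ t : Fin n, ∀ l, 1 ≤ l → l ≤ m → l % 2 = 1 → t ∈ J l →
      (∑ j, Mo t j ≤ 2) ∧
      (t ∈ (Finset.Icc 1 m).biUnion (fun l => bdry (J l)) → ∑ j, Mo t j ≤ lam) ∧
      (∀ j, Mo t j ≠ 0 → S j) := by
    intro t l h1 h2 h3 htl
    have hMoW : ∀ j, Mo t j = W l t j := (key 1).2 l h1 h2 h3 t htl
    have hrw := hrowW l h1 h2 t htl
    refine ⟨?_, ?_, ?_⟩
    · rw [Finset.sum_congr rfl fun j _ => hMoW j, hrw.1]; exact hrw.2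
    · intro hbd
      rw [Finset.sum_congr rfl fun j _ => hMoW j, hrw.1]
      exact hA1 l (Finset.mem_Icc.mpr ⟨h1, h2⟩) t htl hbd
    · intro j hj
      rw [hMoW j] at hj
      have hgb := hblock l (Finset.mem_Icc.mpr ⟨h1, h2⟩)
      have hjb : j ∈ bdry (J l) := by
        by_contra hnb
        exact hj (hgb.2.2 t htl j hnb)
      exact SBS l h1 h2 h3 j hjb
  -- the central lemma
  have CL : ∀ i : Fin n, (∑ j, (Me * Mo) i j ≤ 2) ∧
      (S i → ∑ j, (Me * Mo) i j ≤ lam ^ 2) ∧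
      (∀ j, (Me * Mo) i j ≠ 0 → S j) := by
    intro i
    by_cases hA : ∃ k, 1 ≤ k ∧ k ≤ m ∧ k % 2 = 0 ∧ i ∈ J k
    · obtain ⟨k, hk1, hk2, hk3, hik⟩ := hA
      have hgb := hblock k (Finset.mem_Icc.mpr ⟨hk1, hk2⟩)
      have hMeW : ∀ t, Me i t = W k i t := (key 0).2 k hk1 hk2 hk3 i hik
      have hmul : ∀ j, (Me * Mo) i j = ∑ t, W k i t * Mo t j := by
        intro j
        rw [Matrix.mul_apply]
        exact Finset.sum_congr rfl fun t _ => by rw [hMeW t]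
      have hbt : ∀ t : Fin n, W k i t ≠ 0 →
          t ∈ bdry (J k) ∧ ∃ l, 1 ≤ l ∧ l ≤ m ∧ l % 2 = 1 ∧ t ∈ J l := by
        intro t ht
        have htb : t ∈ bdry (J k) := by
          by_contra hnb
          exact ht (hgb.2.2 i hik t hnb)
        obtain ⟨l, hl1, hl2, hl3, hl4⟩ := SB k hk1 hk2 t htb
        exact ⟨htb, l, hl1, hl2, by omega, hl4⟩
      have hsum : ∑ j, (Me * Mo) i j = ∑ t, W k i t * (∑ j, Mo t j) := by
        rw [Finset.sum_congr rfl fun j _ => hmul j, Finset.sum_comm]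
        exact Finset.sum_congr rfl fun t _ => (Finset.mul_sum _ _ _).symm
      have hterm : ∀ t : Fin n, W k i t * (∑ j, Mo t j) ≤ W k i t * lam := by
        intro t
        by_cases ht : W k i t = 0
        · rw [ht]; simp
        · obtain ⟨htb, l, hl1, hl2, hl3, hl4⟩ := hbt t ht
          have hmemB : t ∈ (Finset.Icc 1 m).biUnion (fun l => bdry (J l)) :=
            Finset.mem_biUnion.mpr ⟨k, Finset.mem_Icc.mpr ⟨hk1, hk2⟩, htb⟩
          exact mul_le_mul_of_nonneg_left
            ((OR t l hl1 hl2 hl3 hl4).2.1 hmemB) ((hgb.1 i t).1)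
      have hsum2 : ∑ j, (Me * Mo) i j ≤ (∑ t, W k i t) * lam := by
        rw [hsum]
        calc ∑ t, W k i t * ∑ j, Mo t j ≤ ∑ t, W k i t * lam :=
              Finset.sum_le_sum fun t _ => hterm t
          _ = (∑ t, W k i t) * lam := (Finset.sum_mul _ _ _).symm
      have hrw := hrowW k hk1 hk2 i hik
      refine ⟨?_, ?_, ?_⟩
      · calc ∑ j, (Me * Mo) i j ≤ (∑ t, W k i t) * lam := hsum2
          _ ≤ 2 * lam := by
              apply mul_le_mul_of_nonneg_right _ hlam0
              rw [hrw.1]; exact hrw.2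
          _ ≤ 2 := by nlinarith
      · intro hSi
        obtain ⟨⟨l, hl1, hl2, hl3⟩, _⟩ := hSi
        have hbdI : i ∈ (Finset.Icc 1 m).biUnion (fun l => bdry (J l)) :=
          Finset.mem_biUnion.mpr ⟨l, Finset.mem_Icc.mpr ⟨hl1, hl2⟩, hl3⟩
        calc ∑ j, (Me * Mo) i j ≤ (∑ t, W k i t) * lam := hsum2
          _ ≤ lam * lam := by
              apply mul_le_mul_of_nonneg_right _ hlam0
              rw [hrw.1]
              exact hA1 k (Finset.mem_Icc.mpr ⟨hk1, hk2⟩) i hik hbdI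
          _ = lam ^ 2 := (sq lam).symm
      · intro j hj
        rw [hmul j] at hj
        obtain ⟨t, _, htne⟩ := Finset.exists_ne_zero_of_sum_ne_zero hj
        have hW : W k i t ≠ 0 := fun h => htne (by rw [h, zero_mul])
        have hMo : Mo t j ≠ 0 := fun h => htne (by rw [h, mul_zero])
        obtain ⟨htb, l, hl1, hl2, hl3, hl4⟩ := hbt t hW
        exact (OR t l hl1 hl2 hl3 hl4).2.2 j hMo
    · push_neg at hA
      have hMeδ : ∀ t, Me i t = if i = t then 1 else 0 :=
        (key 0).1 i (fun k h1 h2 h3 => hA k h1 h2 h3)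
      have hmul : ∀ j, (Me * Mo) i j = Mo i j := by
        intro j
        rw [Matrix.mul_apply]
        have hterm : ∀ t, Me i t * Mo t j = if i = t then Mo t j else 0 := by
          intro t; rw [hMeδ t]; split <;> simp
        rw [Finset.sum_congr rfl fun t _ => hterm t, Finset.sum_ite_eq]
        simp
      obtain ⟨l, hl, hil⟩ := hcover i
      rw [Finset.mem_Icc] at hl
      have hl3 : l % 2 = 1 := by
        rcases Nat.mod_two_eq_zero_or_one l with h | h
        · exact absurd hil (hA l hl.1 hl.2 h)
        · exact h
      have hOR := OR i l hl.1 hl.2 hl3 hil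
      refine ⟨?_, ?_, ?_⟩
      · rw [Finset.sum_congr rfl fun j _ => hmul j]; exact hOR.1
      · intro hSi
        obtain ⟨_, k, hk1, hk2, hk3, hik⟩ := hSi
        exact absurd hik (hA k hk1 hk2 hk3)
      · intro j hj
        rw [hmul j] at hj
        exact hOR.2.2 j hj
  -- rowNorm basics
  have habs : ∀ (A : Matrix (Fin n) (Fin n) ℝ), (∀ i j, 0 ≤ A i j) →
      ∀ i, ∑ j, |A i j| = ∑ j, A i j := by
    intro A hA i
    exact Finset.sum_congr rfl fun j _ => abs_of_nonneg (hA i j)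
  have hnorm_le : ∀ (A : Matrix (Fin n) (Fin n) ℝ) (c : ℝ),
      (∀ i, ∑ j, |A i j| ≤ c) → rowNorm A ≤ c := fun A c h => ciSup_le h
  have hle_norm : ∀ (A : Matrix (Fin n) (Fin n) ℝ) (i : Fin n),
      ∑ j, |A i j| ≤ rowNorm A :=
    fun A i => by
      have h : rowNorm A = ⨆ i, ∑ j, |A i j| := rfl
      rw [h]
      exact le_ciSup (f := fun i => ∑ j, |A i j|)
        (Set.Finite.bddAbove (Set.finite_range _)) i
  have part1 : rowNorm (Me * Mo) ≤ 2 := by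
    apply hnorm_le
    intro i
    rw [habs _ hWmnn i]
    exact (CL i).1
  refine ⟨part1, ?_⟩
  -- nonnegativity of powers
  have hpownn : ∀ p : ℕ, ∀ i j, 0 ≤ ((Me * Mo) ^ p) i j := by
    intro p
    induction p with
    | zero =>
      intro i j
      rw [pow_zero, Matrix.one_apply]
      split <;> norm_num
    | succ p ih =>
      intro i j
      rw [pow_succ, Matrix.mul_apply]
      exact Finset.sum_nonneg fun t _ => mul_nonneg (ih i t) (hWmnn t j)
  have rowsum_mul : ∀ (A B : Matrix (Fin n) (Fin n) ℝ) (i : Fin n),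
      ∑ j, (A * B) i j = ∑ u, A i u * (∑ j, B u j) := by
    intro A B i
    simp only [Matrix.mul_apply]
    rw [Finset.sum_comm]
    exact Finset.sum_congr rfl fun u _ => (Finset.mul_sum _ _ _).symm
  have claim1 : ∀ p : ℕ, ∀ s : Fin n, S s → ∑ t, ((Me * Mo) ^ p) s t ≤ lam ^ (2 * p) := by
    intro p
    induction p with
    | zero =>
      intro s _
      rw [pow_zero]
      simp [Matrix.one_apply]
    | succ p ih =>
      intro s hs
      rw [pow_succ' (Me * Mo) p, rowsum_mul]
      have hterm : ∀ u, (Me * Mo) s u * (∑ t, ((Me * Mo) ^ p) u t)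
          ≤ (Me * Mo) s u * lam ^ (2 * p) := by
        intro u
        by_cases hz : (Me * Mo) s u = 0
        · rw [hz]; simp
        · exact mul_le_mul_of_nonneg_left (ih u ((CL s).2.2 u hz)) (hWmnn s u)
      calc ∑ u, (Me * Mo) s u * (∑ t, ((Me * Mo) ^ p) u t)
          ≤ ∑ u, (Me * Mo) s u * lam ^ (2 * p) := Finset.sum_le_sum fun u _ => hterm u
        _ = (∑ u, (Me * Mo) s u) * lam ^ (2 * p) := (Finset.sum_mul _ _ _).symm
        _ ≤ lam ^ 2 * lam ^ (2 * p) :=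
            mul_le_mul_of_nonneg_right ((CL s).2.1 hs) (pow_nonneg hlam0 _)
        _ = lam ^ (2 * (p + 1)) := by rw [← pow_add]; congr 1; omega
  intro k hk
  obtain ⟨p, rfl⟩ : ∃ p, k = p + 1 := ⟨k - 1, by omega⟩
  simp only [Nat.add_sub_cancel]
  apply hnorm_le
  intro i
  rw [habs _ (hpownn (p + 1)) i]
  rw [pow_succ' (Me * Mo) p, rowsum_mul]
  have hterm : ∀ u, (Me * Mo) i u * (∑ t, ((Me * Mo) ^ p) u t)
      ≤ (Me * Mo) i u * lam ^ (2 * p) := by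
    intro u
    by_cases hz : (Me * Mo) i u = 0
    · rw [hz]; simp
    · exact mul_le_mul_of_nonneg_left (claim1 p u ((CL i).2.2 u hz)) (hWmnn i u)
  have hrow_le : ∑ u, (Me * Mo) i u ≤ rowNorm (Me * Mo) := by
    have h := hle_norm (Me * Mo) i
    rwa [habs _ hWmnn i] at h
  calc ∑ u, (Me * Mo) i u * (∑ t, ((Me * Mo) ^ p) u t)
      ≤ ∑ u, (Me * Mo) i u * lam ^ (2 * p) := Finset.sum_le_sum fun u _ => hterm u
    _ = (∑ u, (Me * Mo) i u) * lam ^ (2 * p) := (Finset.sum_mul _ _ _).symm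
    _ ≤ rowNorm (Me * Mo) * lam ^ (2 * p) :=
        mul_le_mul_of_nonneg_right hrow_le (pow_nonneg hlam0 _)
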